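/- Let ν be a Borel probability measure on ℝ with distribution function F(x) = ν((−∞, x]) and quantile function F^{−1}(p) = inf{x ∈ ℝ : F(x) ≥ p}. For each q ∈ (0,1), let v^{(q)} be the weakly increasing word with letters α_k = F^{−1}(1 − q^k), k = 1, 2, ..., and let w^{(q)} = (w^{(q)}_1, w^{(q)}_2, ...) be its infinite q-shuffle. Then for every n ≥ 1 and all points x_1, ..., x_n ∈ ℝ at which F is continuous, lim_{q → 1⁻} P(w^{(q)}_1 ≤ x_1, ..., w^{(q)}_n ≤ x_n) = F(x_1)⋯F(x_n); that is, the n-dimensional marginal laws of P^{(v^{(q)})} converge weakly to the product measure ν^{⊗n} as q → 1⁻. -/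

import Mathlib

open MeasureTheory ProbabilityTheory Filter

/-- The first `j` values `σ(0), …, σ(j-1)` of the infinite `q`-shuffle permutation driven by
the (0-indexed) geometric choices `x`. -/
noncomputable def shufflePrefix (x : ℕ → ℕ) : ℕ → List ℕ
  | 0 => []
  | j + 1 => shufflePrefix x j ++ [Nat.nth (fun m => m ∉ shufflePrefix x j) (x j)]

/-- The random injection `σ : ℕ → ℕ` driving the infinite `q`-shuffle: `σ(j)` is the
`x j`-th smallest (0-indexed) natural number not in `{σ(0), …, σ(j-1)}`. -/
noncomputable def shuffleSeq (x : ℕ → ℕ) (j : ℕ) : ℕ :=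
  Nat.nth (fun m => m ∉ shufflePrefix x j) (x j)

/-- The distribution function `F(x) = ν((-∞, x])` of a probability measure `ν` on `ℝ`. -/
noncomputable def distFun (ν : Measure ℝ) (x : ℝ) : ℝ := (ν (Set.Iic x)).toReal

/-- The quantile function `F⁻¹(p) = inf {x : F(x) ≥ p}`. -/
noncomputable def quantileFun (ν : Measure ℝ) (p : ℝ) : ℝ := sInf {x : ℝ | p ≤ distFun ν x}

lemma shufflePrefix_length (x : ℕ → ℕ) (j : ℕ) : (shufflePrefix x j).length = j := by
  induction j with
  | zero => rfl
  | succ j ih => simp [shufflePrefix, ih]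

lemma notMem_infinite (L : List ℕ) : (setOf (fun m => m ∉ L)).Infinite := by
  have h : (setOf (fun m => m ∈ L)).Finite := L.finite_toSet
  exact h.infinite_compl

lemma le_shuffleSeq (x : ℕ → ℕ) (j : ℕ) : x j ≤ shuffleSeq x j :=
  (Nat.nth_strictMono (notMem_infinite _)).le_apply

lemma shuffleSeq_le (x : ℕ → ℕ) (j : ℕ) : shuffleSeq x j ≤ x j + j := by
  have hc : x j < Nat.count (fun m => m ∉ shufflePrefix x j) (x j + j + 1) := by
    rw [Nat.count_eq_card_filter_range]
    have h1 : (Finset.range (x j + j + 1)).filter (fun m => m ∈ shufflePrefix x j) ⊆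
        (shufflePrefix x j).toFinset := by
      intro a ha
      simp only [Finset.mem_filter] at ha
      simpa using ha.2
    have h2 : ((Finset.range (x j + j + 1)).filter (fun m => m ∈ shufflePrefix x j)).card ≤ j := by
      refine (Finset.card_le_card h1).trans ?_
      simpa [shufflePrefix_length] using (shufflePrefix x j).toFinset_card_le
    have h3 := Finset.card_filter_add_card_filter_not
      (s := Finset.range (x j + j + 1)) (p := fun m => m ∈ shufflePrefix x j)
    simp only [Finset.card_range] at h3
    omega
  exact Nat.lt_succ_iff.mp (Nat.nth_lt_of_lt_count hc)

lemma distFun_eq_cdf (ν : Measure ℝ) [IsProbabilityMeasure ν] : distFun ν = cdf ν :=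
  funext fun x => (cdf_eq_real ν x).symm

lemma monotone_distFun (ν : Measure ℝ) [IsProbabilityMeasure ν] : Monotone (distFun ν) := by
  rw [distFun_eq_cdf]; exact monotone_cdf ν

lemma distFun_le_one (ν : Measure ℝ) [IsProbabilityMeasure ν] (x : ℝ) : distFun ν x ≤ 1 := by
  rw [distFun_eq_cdf]; exact cdf_le_one ν x

lemma distFun_nonneg (ν : Measure ℝ) [IsProbabilityMeasure ν] (x : ℝ) : 0 ≤ distFun ν x := by
  rw [distFun_eq_cdf]; exact cdf_nonneg ν x

lemma quantileFun_le_iff (ν : Measure ℝ) [IsProbabilityMeasure ν] {p y : ℝ}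
    (hp0 : 0 < p) (hp1 : p < 1) (hy : ContinuousAt (distFun ν) y) :
    quantileFun ν p ≤ y ↔ p ≤ distFun ν y := by
  set S := {x : ℝ | p ≤ distFun ν x} with hS
  have hne : S.Nonempty := by
    have h1 : ∀ᶠ x in atTop, p < distFun ν x := by
      rw [distFun_eq_cdf]
      exact (tendsto_cdf_atTop ν).eventually (eventually_gt_nhds hp1)
    obtain ⟨x0, hx0⟩ := h1.exists
    exact ⟨x0, hx0.le⟩
  have hbdd : BddBelow S := by
    have h1 : ∀ᶠ x in atBot, distFun ν x < p := by
      rw [distFun_eq_cdf]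
      exact (tendsto_cdf_atBot ν).eventually (eventually_lt_nhds hp0)
    obtain ⟨x0, hx0⟩ := h1.exists
    refine ⟨x0, fun z hz => ?_⟩
    by_contra h
    push_neg at h
    exact absurd (hz.trans (monotone_distFun ν h.le)) (not_le.mpr hx0)
  constructor
  · intro h
    have hgt : ∀ t ∈ Set.Ioi y, p ≤ distFun ν t := by
      intro t ht
      have : sInf S < t := lt_of_le_of_lt h ht
      obtain ⟨s, hsS, hst⟩ := (csInf_lt_iff hbdd hne).mp this
      exact hsS.trans (monotone_distFun ν hst.le)
    have hlim : Tendsto (distFun ν) (nhdsWithin y (Set.Ioi y)) (nhds (distFun ν y)) :=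
      hy.continuousWithinAt.tendsto
    exact ge_of_tendsto hlim (eventually_mem_nhdsWithin.mono hgt)
  · intro h
    exact csInf_le hbdd h

open Classical in
noncomputable def geomN (q : ℝ) (b : ℕ) (c : ℝ) : ℕ :=
  if h : ∃ i, q ^ (i + b) < c then Nat.find h else 0

lemma geomN_exists {q c : ℝ} (hq : q ∈ Set.Ioo (0:ℝ) 1) (hc : 0 < c) (b : ℕ) :
    ∃ i, q ^ (i + b) < c := by
  obtain ⟨i, hi⟩ := exists_pow_lt_of_lt_one hc hq.2
  exact ⟨i, lt_of_le_of_lt (pow_le_pow_of_le_one hq.1.le hq.2.le (Nat.le_add_right i b)) hi⟩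

lemma lt_geomN_iff {q c : ℝ} (hq : q ∈ Set.Ioo (0:ℝ) 1) (hc : 0 < c) (b : ℕ) (i : ℕ) :
    i < geomN q b c ↔ c ≤ q ^ (i + b) := by
  have hex := geomN_exists hq hc b
  rw [geomN, dif_pos hex]
  constructor
  · intro h
    exact le_of_not_gt (Nat.find_min hex h)
  · intro h
    by_contra hlt
    push_neg at hlt
    have hspec := Nat.find_spec hex
    have hle : q ^ (i + b) ≤ q ^ (Nat.find hex + b) :=
      pow_le_pow_of_le_one hq.1.le hq.2.le (by omega)
    linarith

lemma geomN_pow_lt {q c : ℝ} (hq : q ∈ Set.Ioo (0:ℝ) 1) (hc : 0 < c) (b : ℕ) :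
    q ^ geomN q b c < c / q ^ b := by
  have hex := geomN_exists hq hc b
  have hspec : q ^ (geomN q b c + b) < c := by rw [geomN, dif_pos hex]; exact Nat.find_spec hex
  rw [lt_div_iff₀ (pow_pos hq.1 b), ← pow_add]
  exact hspec

lemma le_geomN_pow {q c : ℝ} (hq : q ∈ Set.Ioo (0:ℝ) 1) (hc : 0 < c) (hc1 : c ≤ 1)
    {b : ℕ} (hb : 1 ≤ b) : c ≤ q ^ geomN q b c := by
  cases' h : geomN q b c with k
  · simpa using hc1
  · have hk : k < geomN q b c := by omega
    have := (lt_geomN_iff hq hc b k).mp hk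
    refine this.trans (pow_le_pow_of_le_one hq.1.le hq.2.le (by omega))

lemma tendsto_geomN_pow {c : ℝ} (hc : 0 < c) (hc1 : c ≤ 1) {b : ℕ} (hb : 1 ≤ b) :
    Tendsto (fun q : ℝ => q ^ geomN q b c) (nhdsWithin 1 (Set.Ioo (0:ℝ) 1)) (nhds c) := by
  have hupper : Tendsto (fun q : ℝ => c / q ^ b) (nhdsWithin 1 (Set.Ioo (0:ℝ) 1)) (nhds c) := by
    have : Tendsto (fun q : ℝ => c / q ^ b) (nhds 1) (nhds (c / 1 ^ b)) := by
      apply Tendsto.div tendsto_const_nhds ((continuous_pow b).tendsto 1)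
      simp
    simpa using this.mono_left nhdsWithin_le_nhds
  refine tendsto_of_tendsto_of_tendsto_of_le_of_le' tendsto_const_nhds hupper ?_ ?_
  · filter_upwards [self_mem_nhdsWithin] with q hq
    exact le_geomN_pow hq hc hc1 hb
  · filter_upwards [self_mem_nhdsWithin] with q hq
    exact (geomN_pow_lt hq hc b).le

lemma geom_measure_Iio {Ωt : Type*} [MeasurableSpace Ωt] (μ : Measure Ωt)
    {f : Ωt → ℕ} (hf : Measurable f) {q : ℝ} (hq : q ∈ Set.Ioo (0:ℝ) 1)
    (hg : ∀ i, μ {ω | f ω = i} = ENNReal.ofReal ((1 - q) * q ^ i)) (N : ℕ) :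
    μ {ω | f ω < N} = ENNReal.ofReal (1 - q ^ N) := by
  have hset : {ω | f ω < N} = ⋃ i ∈ Finset.range N, f ⁻¹' {i} := by
    ext ω; simp only [Set.mem_setOf_eq, Set.mem_iUnion, Set.mem_preimage, Set.mem_singleton_iff, Finset.mem_range, exists_prop, exists_eq_right']
  rw [hset, measure_biUnion_finset ?_ (fun i _ => hf (measurableSet_singleton i))]
  · have : ∀ i ∈ Finset.range N, μ (f ⁻¹' {i}) = ENNReal.ofReal ((1 - q) * q ^ i) := by
      intro i _; exact hg i
    rw [Finset.sum_congr rfl this, ← ENNReal.ofReal_sum_of_nonneg]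
    · congr 1
      rw [← Finset.mul_sum, geom_sum_eq (ne_of_lt hq.2)]
      have hq1 : q - 1 ≠ 0 := by linarith [hq.2]
      field_simp
      ring
    · intro i _
      exact mul_nonneg (by linarith [hq.2.le]) (pow_nonneg hq.1.le i)
  · intro i _ j _ hij
    rw [Function.onFun, Set.disjoint_left]
    intro ω h1 h2
    simp only [Set.mem_preimage, Set.mem_singleton_iff] at h1 h2
    exact hij (h1.symm.trans h2)

/-- Single-factor limit. -/
lemma factor_tendsto {Ω : ℝ → Type*} [∀ q, MeasurableSpace (Ω q)] (P : ∀ q, Measure (Ω q))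
    (hprob : ∀ q ∈ Set.Ioo (0 : ℝ) 1, IsProbabilityMeasure (P q))
    (f : ∀ q, Ω q → ℕ)
    (hmeas : ∀ q ∈ Set.Ioo (0 : ℝ) 1, Measurable (f q))
    (hg : ∀ q ∈ Set.Ioo (0 : ℝ) 1, ∀ i : ℕ,
      P q {ω | f q ω = i} = ENNReal.ofReal ((1 - q) * q ^ i))
    {c : ℝ} (hc0 : 0 ≤ c) (hc1 : c ≤ 1) (a : ℕ) :
    Tendsto (fun q : ℝ => (P q ((f q) ⁻¹' {k : ℕ | c ≤ q ^ (k + a + 1)})).toReal)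
      (nhdsWithin 1 (Set.Ioo (0 : ℝ) 1)) (nhds (1 - c)) := by
  rcases eq_or_lt_of_le hc0 with hc | hc
  · -- c = 0 : the set is everything
    subst hc
    have heq : (fun q : ℝ => (P q ((f q) ⁻¹' {k : ℕ | (0:ℝ) ≤ q ^ (k + a + 1)})).toReal)
        =ᶠ[nhdsWithin 1 (Set.Ioo (0 : ℝ) 1)] (fun _ => (1 : ℝ)) := by
      filter_upwards [self_mem_nhdsWithin] with q hq
      have hset : ((f q) ⁻¹' {k : ℕ | (0:ℝ) ≤ q ^ (k + a + 1)}) = Set.univ := by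
        ext ω
        simp only [Set.mem_preimage, Set.mem_setOf_eq, Set.mem_univ, iff_true]
        exact (pow_pos hq.1 _).le
      have := hprob q hq
      rw [hset, measure_univ, ENNReal.toReal_one]
    simpa using Tendsto.congr' heq.symm tendsto_const_nhds
  · -- c > 0
    have heq : (fun q : ℝ => (P q ((f q) ⁻¹' {k : ℕ | c ≤ q ^ (k + a + 1)})).toReal)
        =ᶠ[nhdsWithin 1 (Set.Ioo (0 : ℝ) 1)]
          (fun q : ℝ => 1 - q ^ (geomN q (a + 1) c)) := by
      filter_upwards [self_mem_nhdsWithin] with q hq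
      have hset : ((f q) ⁻¹' {k : ℕ | c ≤ q ^ (k + a + 1)})
          = {ω | f q ω < geomN q (a + 1) c} := by
        ext ω
        simp only [Set.mem_preimage, Set.mem_setOf_eq]
        rw [show f q ω + a + 1 = f q ω + (a + 1) from by omega]
        exact ((lt_geomN_iff hq hc (a + 1) (f q ω)).symm)
      rw [hset, geom_measure_Iio (P q) (hmeas q hq) hq (hg q hq) _,
        ENNReal.toReal_ofReal]
      have : q ^ (geomN q (a + 1) c) ≤ 1 := pow_le_one₀ hq.1.le hq.2.le
      linarith
    have hlim : Tendsto (fun q : ℝ => 1 - q ^ (geomN q (a + 1) c))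
        (nhdsWithin 1 (Set.Ioo (0 : ℝ) 1)) (nhds (1 - c)) :=
      tendsto_const_nhds.sub (tendsto_geomN_pow hc hc1 (Nat.le_add_left 1 a))
    exact Tendsto.congr' heq.symm hlim

/-- let `ν` be a probability measure on `ℝ` with distribution function `F` and,
for `q ∈ (0,1)`, let `w^{(q)}` be the infinite `q`-shuffle of the weakly increasing word of
quantiles `α_k = F⁻¹(1 - q^k)`, `k = 1, 2, …` (here the `j`-th letter, `j = 0, 1, …`, is
`F⁻¹(1 - q^{j+1})`).  Then for continuity points `x_1, …, x_n` of `F`,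
`P(w^{(q)}_1 ≤ x_1, …, w^{(q)}_n ≤ x_n) → F(x_1)⋯F(x_n)` as `q → 1⁻`; i.e. the
`n`-dimensional marginals of `P^{(v^{(q)})}` converge weakly to `ν^{⊗n}`.
For each `q ∈ (0,1)`, `ξ q 0, ξ q 1, …` are independent with the (0-indexed) geometric law
`P(ξ = i) = (1-q) q^i` on the probability space `(Ω q, P q)`. -/
theorem stmt_12 (ν : Measure ℝ) [IsProbabilityMeasure ν]
    (Ω : ℝ → Type*) [∀ q, MeasurableSpace (Ω q)] (P : ∀ q, Measure (Ω q))
    (hprob : ∀ q ∈ Set.Ioo (0 : ℝ) 1, IsProbabilityMeasure (P q))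
    (ξ : ∀ q, ℕ → Ω q → ℕ)
    (hmeas : ∀ q ∈ Set.Ioo (0 : ℝ) 1, ∀ j, Measurable (ξ q j))
    (hindep : ∀ q ∈ Set.Ioo (0 : ℝ) 1, iIndepFun (ξ q) (P q))
    (hgeom : ∀ q ∈ Set.Ioo (0 : ℝ) 1, ∀ j i : ℕ,
      P q {ω | ξ q j ω = i} = ENNReal.ofReal ((1 - q) * q ^ i))
    (n : ℕ) (hn : 1 ≤ n) (x : Fin n → ℝ)
    (hx : ∀ m : Fin n, ContinuousAt (distFun ν) (x m)) :
    Tendsto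
      (fun q : ℝ => (P q {ω | ∀ m : Fin n,
        quantileFun ν (1 - q ^ (shuffleSeq (fun t => ξ q t ω) (m : ℕ) + 1)) ≤ x m}).toReal)
      (nhdsWithin 1 (Set.Ioo (0 : ℝ) 1))
      (nhds (∏ m : Fin n, distFun ν (x m))) := by
  classical
  set c : ℕ → ℝ := fun i => if h : i < n then 1 - distFun ν (x ⟨i, h⟩) else 0 with hcdef
  have hcm : ∀ m : Fin n, c (m : ℕ) = 1 - distFun ν (x m) := by
    intro m; simp only [hcdef, m.2, dif_pos, Fin.eta]
  have hc0 : ∀ i, 0 ≤ c i := by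
    intro i
    simp only [hcdef]
    split
    · have := distFun_le_one ν (x ⟨i, by assumption⟩); linarith
    · norm_num
  have hc1 : ∀ i, c i ≤ 1 := by
    intro i
    simp only [hcdef]
    split
    · have := distFun_nonneg ν (x ⟨i, by assumption⟩); linarith
    · norm_num
  -- product formula from independence
  have hprod : ∀ (a : ℕ → ℕ), ∀ q ∈ Set.Ioo (0:ℝ) 1,
      P q (⋂ i ∈ Finset.range n, (ξ q i) ⁻¹' {k : ℕ | c i ≤ q ^ (k + a i + 1)})
        = ∏ i ∈ Finset.range n, P q ((ξ q i) ⁻¹' {k : ℕ | c i ≤ q ^ (k + a i + 1)}) := by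
    intro a q hq
    exact (hindep q hq).meas_biInter
      (fun i _ => ⟨{k : ℕ | c i ≤ q ^ (k + a i + 1)}, trivial, rfl⟩)
  -- factor limits
  have hfac : ∀ (a : ℕ → ℕ) (i : ℕ),
      Tendsto (fun q : ℝ => (P q ((ξ q i) ⁻¹' {k : ℕ | c i ≤ q ^ (k + a i + 1)})).toReal)
        (nhdsWithin 1 (Set.Ioo (0:ℝ) 1)) (nhds (1 - c i)) := by
    intro a i
    exact factor_tendsto P hprob (fun q => ξ q i) (fun q hq => hmeas q hq i)
      (fun q hq => hgeom q hq i) (hc0 i) (hc1 i) (a i)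
  -- limits of sandwich sets
  have hT : ∀ (a : ℕ → ℕ),
      Tendsto (fun q : ℝ => (P q (⋂ i ∈ Finset.range n,
          (ξ q i) ⁻¹' {k : ℕ | c i ≤ q ^ (k + a i + 1)})).toReal)
        (nhdsWithin 1 (Set.Ioo (0:ℝ) 1)) (nhds (∏ i ∈ Finset.range n, (1 - c i))) := by
    intro a
    have hp : Tendsto (fun q : ℝ => ∏ i ∈ Finset.range n,
        (P q ((ξ q i) ⁻¹' {k : ℕ | c i ≤ q ^ (k + a i + 1)})).toReal)
        (nhdsWithin 1 (Set.Ioo (0:ℝ) 1)) (nhds (∏ i ∈ Finset.range n, (1 - c i))) :=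
      tendsto_finset_prod _ (fun i _ => hfac a i)
    refine Tendsto.congr' ?_ hp
    filter_upwards [self_mem_nhdsWithin] with q hq
    rw [hprod a q hq, ENNReal.toReal_prod]
  -- quantile criterion
  have hquant : ∀ q ∈ Set.Ioo (0:ℝ) 1, ∀ (m : Fin n) (k : ℕ),
      (quantileFun ν (1 - q ^ (k + 1)) ≤ x m ↔ c (m : ℕ) ≤ q ^ (k + 1)) := by
    intro q hq m k
    have hpow1 : q ^ (k+1) < 1 := pow_lt_one₀ hq.1.le hq.2 (Nat.succ_ne_zero k)
    have hpow0 : 0 < q ^ (k+1) := pow_pos hq.1 _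
    rw [quantileFun_le_iff ν (by linarith) (by linarith) (hx m), hcm m]
    constructor <;> intro h <;> linarith
  -- sandwich inclusions
  have hsub_low : ∀ q ∈ Set.Ioo (0:ℝ) 1,
      (⋂ i ∈ Finset.range n, (ξ q i) ⁻¹' {k : ℕ | c i ≤ q ^ (k + (fun j => j) i + 1)}) ⊆
      {ω | ∀ m : Fin n,
        quantileFun ν (1 - q ^ (shuffleSeq (fun t => ξ q t ω) (m : ℕ) + 1)) ≤ x m} := by
    intro q hq ω hω
    simp only [Set.mem_iInter, Set.mem_preimage, Set.mem_setOf_eq, Finset.mem_range] at hω ⊢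
    intro m
    have h1 := hω (m : ℕ) m.2
    rw [hquant q hq m _]
    have hσ : shuffleSeq (fun t => ξ q t ω) (m : ℕ) ≤ ξ q (m : ℕ) ω + (m : ℕ) :=
      shuffleSeq_le _ _
    have h2 : q ^ (ξ q (m:ℕ) ω + (m:ℕ) + 1) ≤ q ^ (shuffleSeq (fun t => ξ q t ω) (m:ℕ) + 1) :=
      pow_le_pow_of_le_one hq.1.le hq.2.le (by omega)
    exact h1.trans h2
  have hsub_up : ∀ q ∈ Set.Ioo (0:ℝ) 1,
      {ω | ∀ m : Fin n,
        quantileFun ν (1 - q ^ (shuffleSeq (fun t => ξ q t ω) (m : ℕ) + 1)) ≤ x m} ⊆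
      (⋂ i ∈ Finset.range n, (ξ q i) ⁻¹' {k : ℕ | c i ≤ q ^ (k + (fun _ => 0) i + 1)}) := by
    intro q hq ω hω
    simp only [Set.mem_iInter, Set.mem_preimage, Set.mem_setOf_eq, Finset.mem_range] at hω ⊢
    intro i hi
    have h1 := hω ⟨i, hi⟩
    rw [hquant q hq ⟨i, hi⟩ _] at h1
    have hσ : ξ q i ω ≤ shuffleSeq (fun t => ξ q t ω) i := le_shuffleSeq (fun t => ξ q t ω) i
    have h2 : q ^ (shuffleSeq (fun t => ξ q t ω) i + 1) ≤ q ^ (ξ q i ω + 0 + 1) :=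
      pow_le_pow_of_le_one hq.1.le hq.2.le (by omega)
    exact h1.trans h2
  -- squeeze
  have hfinal : (∏ i ∈ Finset.range n, (1 - c i)) = ∏ m : Fin n, distFun ν (x m) := by
    rw [← Fin.prod_univ_eq_prod_range (fun i => 1 - c i) n]
    exact Finset.prod_congr rfl (fun m _ => by rw [hcm m]; ring)
  rw [← hfinal]
  refine tendsto_of_tendsto_of_tendsto_of_le_of_le' (hT (fun j => j)) (hT (fun _ => 0)) ?_ ?_
  · filter_upwards [self_mem_nhdsWithin] with q hq
    haveI := hprob q hq
    exact ENNReal.toReal_mono (measure_ne_top _ _) (measure_mono (hsub_low q hq))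
  · filter_upwards [self_mem_nhdsWithin] with q hq
    haveI := hprob q hq
    exact ENNReal.toReal_mono (measure_ne_top _ _) (measure_mono (hsub_up q hq))
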